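/- Let T be a tree, let p be a pendant vertex of T with unique neighbour q, and let u be a neighbour of q other than p. Let B_u be the connected component of T − q containing u. Then for every 2-element subset {i,j} of the vertex set with both i and j in B_u, Max4PC_T({p,q},{i,j}) = Max4PC_T({u,q},{i,j}) + 2. -/

import Mathlib

open SimpleGraph

variable {V : Type*}

/-- inclusion hom from induced subgraph -/
def inclHom (G : SimpleGraph V) (s : Set V) : (G.induce s) →g G where
  toFun := Subtype.val
  map_rel' := fun h => h

lemma avoid_of_induce {G : SimpleGraph V} {q a b : V} {ha : a ≠ q} {hb : b ≠ q}
    (h : (SimpleGraph.induce {v : V | v ≠ q} G).Reachable ⟨a, ha⟩ ⟨b, hb⟩) :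
    ∃ W : G.Walk a b, q ∉ W.support := by
  obtain ⟨W⟩ := h
  refine ⟨W.map (inclHom G _), ?_⟩
  change q ∉ (W.map (inclHom G {v : V | v ≠ q})).support
  rw [SimpleGraph.Walk.support_map]
  intro hq
  obtain ⟨⟨v, hv⟩, _, hv2⟩ := List.mem_map.mp hq
  exact hv hv2

lemma eq_of_avoid_walk [DecidableEq V] {G : SimpleGraph V} (hA : G.IsAcyclic) {q u w : V}
    (huq : G.Adj u q) (hwq : G.Adj w q) (W : G.Walk w u) (hW : q ∉ W.support) :
    w = u := by
  by_contra h
  have hP : q ∉ W.toPath.1.support := fun hq => hW (W.support_toPath_subset hq)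
  have hP' : (SimpleGraph.Walk.cons hwq (SimpleGraph.Walk.cons huq.symm
      SimpleGraph.Walk.nil)).IsPath := by
    simp [SimpleGraph.Walk.isPath_def, hwq.ne, huq.ne', h]
  have := hA.path_unique W.toPath ⟨_, hP'⟩
  apply hP
  rw [this]
  simp

lemma dist_q_eq [DecidableEq V] {G : SimpleGraph V} (hT : G.IsTree) {q u i : V}
    (huq : G.Adj u q) (hi : i ≠ q) (Wiu : G.Walk i u) (hWiu : q ∉ Wiu.support) :
    G.dist q i = G.dist u i + 1 := by
  have hc := hT.isConnected
  have hle : G.dist q i ≤ G.dist u i + 1 := by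
    have := hc.dist_triangle (u := q) (v := u) (w := i)
    have h1 : G.dist q u = 1 := SimpleGraph.dist_eq_one_iff_adj.mpr huq.symm
    omega
  have hge : G.dist u i + 1 ≤ G.dist q i := by
    obtain ⟨P, hPpath, hPlen⟩ := (hc.preconnected q i).exists_path_of_dist
    cases P with
    | nil => exact absurd rfl hi.symm
    | @cons _ w _ h W' =>
      rw [SimpleGraph.Walk.cons_isPath_iff] at hPpath
      have hwu : w = u := by
        refine eq_of_avoid_walk hT.IsAcyclic huq h.symm (W'.append Wiu) ?_
        rw [SimpleGraph.Walk.mem_support_append_iff]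
        rintro (hq | hq)
        · exact hPpath.2 hq
        · exact hWiu hq
      subst hwu
      have := SimpleGraph.dist_le W'
      simp only [SimpleGraph.Walk.length_cons] at hPlen
      omega
  omega

lemma leaf_nbr [Fintype V] [DecidableEq V] {G : SimpleGraph V} [DecidableRel G.Adj]
    {p q : V} (hp : G.degree p = 1) (hpq : G.Adj p q) {w : V} (h : G.Adj p w) : w = q := by
  rw [← SimpleGraph.card_neighborFinset_eq_degree, Finset.card_eq_one] at hp
  obtain ⟨a, ha⟩ := hp
  have h1 : q ∈ G.neighborFinset p := (SimpleGraph.mem_neighborFinset _ _ _).mpr hpq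
  have h2 : w ∈ G.neighborFinset p := (SimpleGraph.mem_neighborFinset _ _ _).mpr h
  rw [ha, Finset.mem_singleton] at h1 h2
  rw [h1, h2]

lemma dist_p_eq [Fintype V] [DecidableEq V] {G : SimpleGraph V} [DecidableRel G.Adj]
    (hT : G.IsTree) {p q i : V} (hp : G.degree p = 1) (hpq : G.Adj p q) (hi : i ≠ p) :
    G.dist p i = G.dist q i + 1 := by
  have hc := hT.isConnected
  have hle : G.dist p i ≤ G.dist q i + 1 := by
    have := hc.dist_triangle (u := p) (v := q) (w := i)
    have h1 : G.dist p q = 1 := SimpleGraph.dist_eq_one_iff_adj.mpr hpq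
    omega
  have hge : G.dist q i + 1 ≤ G.dist p i := by
    obtain ⟨P, hPpath, hPlen⟩ := (hc.preconnected p i).exists_path_of_dist
    cases P with
    | nil => exact absurd rfl hi.symm
    | @cons _ w _ h W' =>
      have hwq : w = q := leaf_nbr hp hpq h
      subst hwq
      have := SimpleGraph.dist_le W'
      simp only [SimpleGraph.Walk.length_cons] at hPlen
      omega
  omega

lemma ne_p_of_avoid [Fintype V] [DecidableEq V] {G : SimpleGraph V} [DecidableRel G.Adj]
    {p q u i : V} (hp : G.degree p = 1) (hpq : G.Adj p q) (hup : u ≠ p)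
    (Wiu : G.Walk i u) (hWiu : q ∉ Wiu.support) : i ≠ p := by
  rintro rfl
  cases Wiu with
  | nil => exact hup rfl
  | @cons _ w _ h W' =>
    have hwq : w = q := leaf_nbr hp hpq h
    subst hwq
    exact hWiu (by simp)


/-- The maximum of the three four-point sums for vertices `w, x, y, z`:
`max (d w x + d y z) (max (d w y + d x z) (d w z + d x y))`.
This is the entry of the matrix `Max4PC` in row `{w,x}` and column `{y,z}`. -/
noncomputable def max4 (G : SimpleGraph V) (w x y z : V) : ℕ :=
  max (G.dist w x + G.dist y z) (max (G.dist w y + G.dist x z) (G.dist w z + G.dist x y))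

/-- Let `p` be a pendant vertex of a tree with unique neighbour `q`, and let `u` be a
neighbour of `q` other than `p`.  If `i` and `j` both lie in the connected component
`B_u` of `T - q` containing `u`, then
`Max4PC_T({p,q},{i,j}) = Max4PC_T({u,q},{i,j}) + 2`. -/
theorem max4_pendant_component_both {V : Type*} [Fintype V] [DecidableEq V]
    (G : SimpleGraph V) [DecidableRel G.Adj] (hT : G.IsTree) (p q u : V)
    (hp : G.degree p = 1) (hpq : G.Adj p q) (huq : G.Adj u q) (hup : u ≠ p)
    (i j : V) (hij : i ≠ j) (hi : i ≠ q) (hj : j ≠ q)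
    (hiB : (SimpleGraph.induce {v : V | v ≠ q} G).Reachable ⟨i, hi⟩ ⟨u, huq.ne⟩)
    (hjB : (SimpleGraph.induce {v : V | v ≠ q} G).Reachable ⟨j, hj⟩ ⟨u, huq.ne⟩) :
    max4 G p q i j = max4 G u q i j + 2 := by
  obtain ⟨Wi, hWi⟩ := avoid_of_induce hiB
  obtain ⟨Wj, hWj⟩ := avoid_of_induce hjB
  have hip : i ≠ p := ne_p_of_avoid hp hpq hup Wi hWi
  have hjp : j ≠ p := ne_p_of_avoid hp hpq hup Wj hWj
  have hqi : G.dist q i = G.dist u i + 1 := dist_q_eq hT huq hi Wi hWi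
  have hqj : G.dist q j = G.dist u j + 1 := dist_q_eq hT huq hj Wj hWj
  have hpi : G.dist p i = G.dist u i + 2 := by rw [dist_p_eq hT hp hpq hip, hqi]
  have hpj : G.dist p j = G.dist u j + 2 := by rw [dist_p_eq hT hp hpq hjp, hqj]
  have hpq1 : G.dist p q = 1 := SimpleGraph.dist_eq_one_iff_adj.mpr hpq
  have huq1 : G.dist u q = 1 := SimpleGraph.dist_eq_one_iff_adj.mpr huq
  have htri : G.dist i j ≤ G.dist u i + G.dist u j := by
    have h1 := hT.isConnected.dist_triangle (u := i) (v := u) (w := j)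
    have h2 : G.dist i u = G.dist u i := SimpleGraph.dist_comm
    omega
  unfold max4
  rw [hpq1, huq1, hpi, hpj, hqi, hqj]
  simp only [Nat.max_def]
  split_ifs <;> omega
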